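/- Let G = (V,E) be a connected graph without self-loops on n vertices, and let A be the lazy voter interaction matrix a_{u,v} = (1/2)·1{u=v} + (1/(2d_u))·1{(u,v)∈E}. Then 1/Φ_A ≤ 2·(d(V)/d_min)·(1/Φ(G)), where d(V) = Σ_v d_v, d_min is the minimum degree, and Φ(G) is the graph conductance. -/

import Mathlib

open scoped BigOperators Classical
open Finset

noncomputable section

/-- Real-valued 0/1 vector associated with a Boolean state. -/
def val {n : ℕ} (x : Fin n → Bool) : Fin n → ℝ := fun u => if x u then 1 else 0

/-- Dot product of two vectors. -/
def dotp {n : ℕ} (a x : Fin n → ℝ) : ℝ := ∑ v, a v * x v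

/-- A state is a consensus state if all nodes are in the same state. -/
def IsCons {n : ℕ} (x : Fin n → Bool) : Prop := (∀ u, x u = true) ∨ (∀ u, x u = false)

/-- A matrix is stochastic: nonnegative entries, rows summing to one. -/
def IsStochastic {n : ℕ} (A : Matrix (Fin n) (Fin n) ℝ) : Prop :=
  (∀ u v, 0 ≤ A u v) ∧ ∀ u, ∑ v, A u v = 1

/-- Irreducible and aperiodic (primitivity for finite stochastic matrices). -/
def IsIrreducibleAperiodic {n : ℕ} (A : Matrix (Fin n) (Fin n) ℝ) : Prop :=
  ∃ N : ℕ, ∀ k ≥ N, ∀ u v, 0 < (A ^ k) u v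

/-- `π` is the (positive) stationary distribution of `A`: `πᵀ = πᵀ A`. -/
def IsStationary' {n : ℕ} (A : Matrix (Fin n) (Fin n) ℝ) (π : Fin n → ℝ) : Prop :=
  (∀ v, 0 < π v) ∧ (∑ v, π v = 1) ∧ ∀ v, ∑ u, π u * A u v = π v

/-- One-step transition probability of the voter model: conditionally on `x`, the
coordinates of the next state are independent Bernoulli(`aᵤᵀ x`). -/
def voterKernel {n : ℕ} (A : Matrix (Fin n) (Fin n) ℝ) (x y : Fin n → Bool) : ℝ :=
  ∏ u, (if y u then dotp (A u) (val x) else 1 - dotp (A u) (val x))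

/-- The Lyapunov function `V_π(x) = (πᵀx)(1 − πᵀx)`. -/
def Vpi {n : ℕ} (π : Fin n → ℝ) (x : Fin n → Bool) : ℝ :=
  dotp π (val x) * (1 - dotp π (val x))

/-- The quantity `Φ_A`: minimum over non-consensus states of
`Σᵤ πᵤ² (aᵤᵀx)(1−aᵤᵀx) / ((πᵀx)(1−πᵀx))`. -/
def PhiA {n : ℕ} (A : Matrix (Fin n) (Fin n) ℝ) (π : Fin n → ℝ) : ℝ :=
  ⨅ x : {x : Fin n → Bool // ¬ IsCons x},
    (∑ u, (π u) ^ 2 * (dotp (A u) (val x.1) * (1 - dotp (A u) (val x.1)))) / Vpi π x.1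

/-- The conductance `Φ(G)` of a graph `G`. -/
def conductance {n : ℕ} (G : SimpleGraph (Fin n)) [DecidableRel G.Adj] : ℝ :=
  ⨅ S : {S : Finset (Fin n) // S.Nonempty ∧ S ≠ Finset.univ},
    (∑ u ∈ S.1, ∑ v ∈ S.1ᶜ, if G.Adj u v then (1 : ℝ) else 0) /
      min (∑ v ∈ S.1, (G.degree v : ℝ)) (∑ v ∈ S.1ᶜ, (G.degree v : ℝ))

set_option maxHeartbeats 1000000 in
/-- For the lazy voter interaction matrix
`a_{u,v} = (1/2)·1{u=v} + (1/(2dᵤ))·1{(u,v)∈E}` on a connected graph `G`,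
`1/Φ_A ≤ 2 (d(V)/d_min) (1/Φ(G))`, where `π_v = d_v/d(V)` is the stationary
distribution. -/
theorem phiA_conductance_bound {n : ℕ} (hn : 2 ≤ n)
    (G : SimpleGraph (Fin n)) [DecidableRel G.Adj] (hG : G.Connected)
    (A : Matrix (Fin n) (Fin n) ℝ)
    (hA : ∀ u v, A u v
      = (if u = v then (1 : ℝ) / 2 else 0)
        + (if G.Adj u v then 1 / (2 * (G.degree u : ℝ)) else 0)) :
    1 / PhiA A (fun v => (G.degree v : ℝ) / ∑ w, (G.degree w : ℝ))
      ≤ 2 * ((∑ v, (G.degree v : ℝ)) / ⨅ v, (G.degree v : ℝ))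
          * (1 / conductance G) := by
  classical
  -- positivity of degrees
  have hdegpos : ∀ v, 0 < (G.degree v : ℝ) := by
    intro v
    have hi : ((⟨0, by omega⟩ : Fin n) : Fin n) ≠ (⟨1, by omega⟩ : Fin n) := by simp [Fin.ext_iff]
    haveI : Nontrivial (Fin n) := ⟨_, _, hi⟩
    obtain ⟨w, hw⟩ := exists_ne v
    obtain ⟨p⟩ := hG.preconnected v w
    obtain ⟨d, -, hd1, hd2⟩ := p.exists_boundary_dart {v} rfl (by simpa using hw)
    have : ∃ u, G.Adj v u := ⟨d.snd, by have := d.adj; rwa [show d.fst = v from hd1] at this⟩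
    exact_mod_cast (G.degree_pos_iff_exists_adj v).2 this
  have hcompl : ∀ S : Finset (Fin n), S ≠ Finset.univ → Sᶜ.Nonempty := by
    intro S h
    rw [Finset.nonempty_iff_ne_empty]
    simpa [Finset.compl_eq_empty_iff] using h
  set D := ∑ w, (G.degree w : ℝ) with hD
  have hDpos : 0 < D := Finset.sum_pos (fun v _ => hdegpos v) ⟨⟨0, by omega⟩, mem_univ _⟩
  set dm := ⨅ v, (G.degree v : ℝ) with hdm
  have hdmle : ∀ v, dm ≤ (G.degree v : ℝ) := fun v =>
    ciInf_le (Set.Finite.bddBelow (Set.finite_range _)) v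
  have hdmpos : 0 < dm := by
    haveI : Nonempty (Fin n) := ⟨⟨0, by omega⟩⟩
    obtain ⟨v₀, hv₀⟩ := Finite.exists_min (fun v => (G.degree v : ℝ))
    exact lt_of_lt_of_le (hdegpos v₀) (le_ciInf hv₀)
  -- each proper nonempty set has at least one crossing edge
  have hedge : ∀ S : Finset (Fin n), S.Nonempty → S ≠ Finset.univ →
      (1:ℝ) ≤ ∑ u ∈ S, ∑ v ∈ Sᶜ, (if G.Adj u v then (1:ℝ) else 0) := by
    intro S hS1 hS2
    obtain ⟨u, hu⟩ := hS1
    obtain ⟨w, hw⟩ := hcompl S hS2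
    obtain ⟨p⟩ := hG.preconnected u w
    obtain ⟨d, -, hd1, hd2⟩ := p.exists_boundary_dart (S : Set (Fin n)) (by simpa using hu)
      (by simpa using Finset.mem_compl.1 hw)
    have h1 : d.fst ∈ S := by simpa using hd1
    have h2 : d.snd ∈ Sᶜ := by simpa using hd2
    calc (1:ℝ) = (if G.Adj d.fst d.snd then (1:ℝ) else 0) := by simp [d.adj]
      _ ≤ ∑ v ∈ Sᶜ, (if G.Adj d.fst v then (1:ℝ) else 0) :=
          Finset.single_le_sum (f := fun v => if G.Adj d.fst v then (1:ℝ) else 0)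
            (fun v _ => by split <;> norm_num) h2
      _ ≤ ∑ u ∈ S, ∑ v ∈ Sᶜ, (if G.Adj u v then (1:ℝ) else 0) :=
          Finset.single_le_sum (f := fun u => ∑ v ∈ Sᶜ, if G.Adj u v then (1:ℝ) else 0)
            (fun u _ => Finset.sum_nonneg fun v _ => by split <;> norm_num) h1
  haveI hne : Nonempty {S : Finset (Fin n) // S.Nonempty ∧ S ≠ Finset.univ} := by
    refine ⟨⟨{⟨0, by omega⟩}, ⟨_, mem_singleton_self _⟩, ?_⟩⟩
    intro h
    have : (⟨1, by omega⟩ : Fin n) ∈ ({(⟨0, by omega⟩ : Fin n)} : Finset (Fin n)) :=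
      h ▸ mem_univ _
    simp [Fin.ext_iff] at this
  have hbddc : BddBelow (Set.range fun S : {S : Finset (Fin n) // S.Nonempty ∧ S ≠ Finset.univ} =>
      (∑ u ∈ S.1, ∑ v ∈ S.1ᶜ, if G.Adj u v then (1 : ℝ) else 0) /
        min (∑ v ∈ S.1, (G.degree v : ℝ)) (∑ v ∈ S.1ᶜ, (G.degree v : ℝ))) :=
    Set.Finite.bddBelow (Set.finite_range _)
  have hcondpos : 0 < conductance G := by
    refine lt_of_lt_of_le (div_pos one_pos hDpos) (le_ciInf fun S => ?_)
    have hE := hedge S.1 S.2.1 S.2.2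
    have hdS : 0 < ∑ v ∈ S.1, (G.degree v : ℝ) :=
      Finset.sum_pos (fun v _ => hdegpos v) S.2.1
    have hdSc : 0 < ∑ v ∈ S.1ᶜ, (G.degree v : ℝ) :=
      Finset.sum_pos (fun v _ => hdegpos v) (hcompl S.1 S.2.2)
    have hmin : 0 < min (∑ v ∈ S.1, (G.degree v : ℝ)) (∑ v ∈ S.1ᶜ, (G.degree v : ℝ)) :=
      lt_min hdS hdSc
    have hminD : min (∑ v ∈ S.1, (G.degree v : ℝ)) (∑ v ∈ S.1ᶜ, (G.degree v : ℝ)) ≤ D := by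
      refine le_trans (min_le_left _ _) ?_
      rw [hD]
      exact Finset.sum_le_sum_of_subset_of_nonneg (subset_univ _)
        (fun v _ _ => (hdegpos v).le)
    exact div_le_div₀ (by linarith) hE hmin hminD
  set π : Fin n → ℝ := fun v => (G.degree v : ℝ) / D with hπ
  -- the key per-state bound
  have hkey : ∀ x : Fin n → Bool, ¬ IsCons x →
      dm / (2*D) * conductance G ≤
      (∑ u, (π u) ^ 2 * (dotp (A u) (val x) * (1 - dotp (A u) (val x)))) / Vpi π x := by
    intro x hx
    set S : Finset (Fin n) := Finset.univ.filter (fun u => x u = true) with hS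
    have hmemS : ∀ u, u ∈ S ↔ x u = true := by intro u; simp [hS]
    have hmemSc : ∀ u, u ∈ Sᶜ ↔ x u = false := by
      intro u; simp [hS, Bool.not_eq_true]
    have hS1 : S.Nonempty := by
      rw [IsCons, not_or] at hx
      obtain ⟨u, hu⟩ := not_forall.1 hx.2
      exact ⟨u, (hmemS u).2 (Bool.not_eq_false _ ▸ hu)⟩
    have hS2 : S ≠ Finset.univ := by
      rw [IsCons, not_or] at hx
      obtain ⟨u, hu⟩ := not_forall.1 hx.1
      intro h
      exact hu ((hmemS u).1 (h ▸ mem_univ u))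
    set a : Fin n → ℝ := fun u => ∑ v, if G.Adj u v then val x v else 0 with ha
    set b : Fin n → ℝ := fun u => ∑ v, if G.Adj u v then 1 - val x v else 0 with hb
    have haeq : ∀ u, a u = ∑ v, if G.Adj u v then val x v else 0 := fun u => by rw [ha]
    have hbeq : ∀ u, b u = ∑ v, if G.Adj u v then 1 - val x v else 0 := fun u => by rw [hb]
    have hval01 : ∀ v, val x v = 0 ∨ val x v = 1 := by
      intro v; by_cases h : x v <;> simp [_root_.val, h]
    have hvalT : ∀ v, x v = true → val x v = 1 := by intro v h; simp [_root_.val, h]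
    have hvalF : ∀ v, x v = false → val x v = 0 := by intro v h; simp [_root_.val, h]
    have ha0 : ∀ u, 0 ≤ a u := by
      intro u; rw [haeq]; refine Finset.sum_nonneg fun v _ => ?_
      rcases hval01 v with h | h <;> split <;> simp [h]
    have hb0 : ∀ u, 0 ≤ b u := by
      intro u; rw [hbeq]; refine Finset.sum_nonneg fun v _ => ?_
      rcases hval01 v with h | h <;> split <;> simp [h]
    have hab : ∀ u, a u + b u = (G.degree u : ℝ) := by
      intro u
      rw [haeq, hbeq, ← Finset.sum_add_distrib]
      have he : ∀ v : Fin n, ((if G.Adj u v then val x v else 0)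
          + if G.Adj u v then 1 - val x v else 0) = if G.Adj u v then (1:ℝ) else 0 := by
        intro v; split <;> ring
      rw [Finset.sum_congr rfl fun v _ => he v, Finset.sum_boole]
      congr 1
      rw [← SimpleGraph.neighborFinset_eq_filter]
      rfl
    have hq : ∀ u, dotp (A u) (val x)
        = (val x u * (G.degree u : ℝ) + a u) / (2 * (G.degree u : ℝ)) := by
      intro u
      have hd0 : (G.degree u : ℝ) ≠ 0 := (hdegpos u).ne'
      rw [dotp]
      have he : ∀ v, A u v * val x v
          = (if u = v then (1/2) * val x v else 0)
            + (1/(2*(G.degree u : ℝ))) * (if G.Adj u v then val x v else 0) := by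
        intro v; rw [hA]
        by_cases h : u = v <;> by_cases h' : G.Adj u v <;> simp [h, h'] <;> ring
      rw [Finset.sum_congr rfl fun v _ => he v, Finset.sum_add_distrib,
        Finset.sum_ite_eq, ← Finset.mul_sum, ← haeq u]
      simp only [mem_univ, if_true]
      field_simp
    have hq' : ∀ u, 1 - dotp (A u) (val x)
        = ((1 - val x u) * (G.degree u : ℝ) + b u) / (2 * (G.degree u : ℝ)) := by
      intro u
      have hd0 : (G.degree u : ℝ) ≠ 0 := (hdegpos u).ne'
      have hnum : ((1 - val x u) * (G.degree u : ℝ) + b u)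
          + (val x u * (G.degree u : ℝ) + a u) = 2 * (G.degree u : ℝ) := by
        linear_combination hab u
      rw [hq u, sub_eq_iff_eq_add, ← add_div, hnum]
      exact (div_self (by nlinarith [hdegpos u] : (2:ℝ) * (G.degree u : ℝ) ≠ 0)).symm
    have hterm : ∀ u, (π u) ^ 2 * (dotp (A u) (val x) * (1 - dotp (A u) (val x)))
        = (val x u * (G.degree u : ℝ) + a u) * ((1 - val x u) * (G.degree u : ℝ) + b u)
          / (4 * D^2) := by
      intro u
      have hd0 : (G.degree u : ℝ) ≠ 0 := (hdegpos u).ne'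
      have hD0 : D ≠ 0 := hDpos.ne'
      rw [hq' u, hq u]
      simp only [hπ]
      field_simp
      ring
    -- restriction identities
    have haS : ∀ u, a u = ∑ v ∈ S, (if G.Adj u v then (1:ℝ) else 0) := by
      intro u
      have hres : ∑ v ∈ S, (if G.Adj u v then val x v else 0)
          = ∑ v ∈ univ, (if G.Adj u v then val x v else 0) := by
        refine Finset.sum_subset (Finset.subset_univ S) (fun v _ hv => ?_)
        have hxv : x v = false := by
          rcases Bool.eq_false_or_eq_true (x v) with h | h
          · exact absurd ((hmemS v).2 h) hv
          · exact h
        simp [_root_.val, hxv]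
      rw [haeq, ← hres]
      exact Finset.sum_congr rfl fun v hv => by simp [hvalT v ((hmemS v).1 hv)]
    have hbS : ∀ u, b u = ∑ v ∈ Sᶜ, (if G.Adj u v then (1:ℝ) else 0) := by
      intro u
      have hres : ∑ v ∈ Sᶜ, (if G.Adj u v then 1 - val x v else 0)
          = ∑ v ∈ univ, (if G.Adj u v then 1 - val x v else 0) := by
        refine Finset.sum_subset (Finset.subset_univ Sᶜ) (fun v _ hv => ?_)
        have hxv : x v = true := by
          rcases Bool.eq_false_or_eq_true (x v) with h | h
          · exact h
          · exact absurd ((hmemSc v).2 h) hv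
        simp [_root_.val, hxv]
      rw [hbeq, ← hres]
      exact Finset.sum_congr rfl fun v hv => by simp [hvalF v ((hmemSc v).1 hv)]
    have hEnn : (1:ℝ) ≤ ∑ u ∈ S, ∑ v ∈ Sᶜ, (if G.Adj u v then (1:ℝ) else 0) :=
      hedge S hS1 hS2
    have hsumb : ∑ u ∈ S, b u = ∑ u ∈ S, ∑ v ∈ Sᶜ, (if G.Adj u v then (1:ℝ) else 0) :=
      Finset.sum_congr rfl fun u _ => hbS u
    have hsuma : ∑ u ∈ Sᶜ, a u = ∑ u ∈ S, ∑ v ∈ Sᶜ, (if G.Adj u v then (1:ℝ) else 0) := by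
      rw [Finset.sum_congr rfl fun u (_ : u ∈ Sᶜ) => haS u, Finset.sum_comm]
      refine Finset.sum_congr rfl fun u _ => Finset.sum_congr rfl fun v _ => ?_
      by_cases h : G.Adj u v
      · have h' : G.Adj v u := h.symm
        simp [h, h']
      · have h' : ¬ G.Adj v u := fun hh => h hh.symm
        simp [h, h']
    -- pointwise lower bound
    have hpt : ∀ u, dm * (val x u * b u + (1 - val x u) * a u)
        ≤ (val x u * (G.degree u : ℝ) + a u) * ((1 - val x u) * (G.degree u : ℝ) + b u) := by
      intro u
      have h1 := hdmle u
      have h2 := ha0 u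
      have h3 := hb0 u
      rcases hval01 u with h | h <;> rw [h] <;> nlinarith
    have hsum2E : ∑ u, (val x u * b u + (1 - val x u) * a u)
        = 2 * ∑ u ∈ S, ∑ v ∈ Sᶜ, (if G.Adj u v then (1:ℝ) else 0) := by
      rw [← Finset.sum_add_sum_compl S]
      have h1 : ∑ u ∈ S, (val x u * b u + (1 - val x u) * a u) = ∑ u ∈ S, b u :=
        Finset.sum_congr rfl fun u hu => by rw [hvalT u ((hmemS u).1 hu)]; ring
      have h2 : ∑ u ∈ Sᶜ, (val x u * b u + (1 - val x u) * a u) = ∑ u ∈ Sᶜ, a u :=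
        Finset.sum_congr rfl fun u hu => by rw [hvalF u ((hmemSc u).1 hu)]; ring
      rw [h1, h2, hsumb, hsuma]; ring
    have hdSpos : 0 < ∑ v ∈ S, (G.degree v : ℝ) :=
      Finset.sum_pos (fun v _ => hdegpos v) hS1
    have hdScpos : 0 < ∑ v ∈ Sᶜ, (G.degree v : ℝ) :=
      Finset.sum_pos (fun v _ => hdegpos v) (hcompl S hS2)
    have hdsum : (∑ v ∈ S, (G.degree v : ℝ)) + ∑ v ∈ Sᶜ, (G.degree v : ℝ) = D := by
      rw [hD]; exact Finset.sum_add_sum_compl S _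
    have hdot : dotp π (val x) = (∑ v ∈ S, (G.degree v : ℝ)) / D := by
      rw [dotp]
      simp only [hπ, div_mul_eq_mul_div]
      rw [← Finset.sum_div]
      congr 1
      have hres : ∑ v ∈ S, ((G.degree v : ℝ) * val x v)
          = ∑ v ∈ univ, ((G.degree v : ℝ) * val x v) := by
        refine Finset.sum_subset (Finset.subset_univ S) (fun v _ hv => ?_)
        have hxv : x v = false := by
          rcases Bool.eq_false_or_eq_true (x v) with h | h
          · exact absurd ((hmemS v).2 h) hv
          · exact h
        simp [_root_.val, hxv]
      rw [← hres]
      exact Finset.sum_congr rfl fun v hv => by simp [hvalT v ((hmemS v).1 hv)]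
    have hVpi : Vpi π x
        = (∑ v ∈ S, (G.degree v : ℝ)) * (∑ v ∈ Sᶜ, (G.degree v : ℝ)) / D^2 := by
      have hD0 : D ≠ 0 := hDpos.ne'
      have e1 : (1 : ℝ) - (∑ v ∈ S, (G.degree v : ℝ)) / D = (∑ v ∈ Sᶜ, (G.degree v : ℝ)) / D := by
        rw [eq_div_iff hD0, sub_mul, div_mul_cancel₀ _ hD0, one_mul]
        linarith [hdsum]
      rw [Vpi, hdot, e1]
      ring
    have hNlow : dm * (2 * ∑ u ∈ S, ∑ v ∈ Sᶜ, (if G.Adj u v then (1:ℝ) else 0)) / (4 * D^2)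
        ≤ ∑ u, (π u) ^ 2 * (dotp (A u) (val x) * (1 - dotp (A u) (val x))) := by
      rw [Finset.sum_congr rfl fun u _ => hterm u, ← Finset.sum_div]
      have h4D2 : (0:ℝ) < 4 * D^2 := by nlinarith [hDpos]
      rw [div_le_div_iff_of_pos_right h4D2]
      rw [← hsum2E, Finset.mul_sum]
      exact Finset.sum_le_sum fun u _ => hpt u
    -- combine
    set E : ℝ := ∑ u ∈ S, ∑ v ∈ Sᶜ, (if G.Adj u v then (1:ℝ) else 0) with hE
    set dS : ℝ := ∑ v ∈ S, (G.degree v : ℝ) with hdS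
    set dSc : ℝ := ∑ v ∈ Sᶜ, (G.degree v : ℝ) with hdSc
    set N : ℝ := ∑ u, (π u) ^ 2 * (dotp (A u) (val x) * (1 - dotp (A u) (val x))) with hN
    have hcond_le : conductance G ≤ E / min dS dSc := ciInf_le hbddc ⟨S, hS1, hS2⟩
    have hmnpos : 0 < min dS dSc := lt_min hdSpos hdScpos
    have hmnle : dS * dSc ≤ min dS dSc * D := by
      rcases le_total dS dSc with h | h
      · rw [min_eq_left h]; nlinarith
      · rw [min_eq_right h]; nlinarith
    have hNlow' : dm * (2 * E) ≤ N * (4 * D^2) :=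
      (div_le_iff₀ (by nlinarith [hDpos] : (0:ℝ) < 4 * D^2)).1 hNlow
    have hEpos : (0:ℝ) < E := lt_of_lt_of_le one_pos hEnn
    have hN0 : 0 ≤ N :=
      le_trans (div_nonneg (by nlinarith [hdmpos, hEpos]) (by nlinarith [hDpos])) hNlow
    calc dm / (2*D) * conductance G
        ≤ dm / (2*D) * (E / min dS dSc) :=
          mul_le_mul_of_nonneg_left hcond_le (div_nonneg hdmpos.le (by nlinarith [hDpos]))
      _ = dm * E / (2 * D * min dS dSc) := by rw [div_mul_div_comm]
      _ ≤ N / Vpi π x := by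
          have hp1 : (0:ℝ) < 2 * D * min dS dSc := by nlinarith [mul_pos hDpos hmnpos]
          have hp2 : (0:ℝ) < dS * dSc := mul_pos hdSpos hdScpos
          rw [hVpi, div_div_eq_mul_div, div_le_div_iff₀ hp1 hp2]
          nlinarith [mul_le_mul_of_nonneg_left hmnle
              (by nlinarith [hdmpos, hEpos] : (0:ℝ) ≤ dm * E),
            mul_le_mul_of_nonneg_right hNlow' (mul_pos hmnpos hDpos).le,
            hmnpos, hDpos]
  haveI hnecons : Nonempty {x : Fin n → Bool // ¬ IsCons x} := by
    refine ⟨⟨fun u => decide (u = ⟨0, by omega⟩), ?_⟩⟩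
    rintro (h | h)
    · have := h ⟨1, by omega⟩
      simp [Fin.ext_iff] at this
    · have := h ⟨0, by omega⟩
      simp at this
  have hPhiAle : dm / (2*D) * conductance G ≤ PhiA A π := by
    unfold PhiA
    exact le_ciInf fun x => hkey x.1 x.2
  have hcpos : 0 < dm / (2*D) * conductance G :=
    mul_pos (div_pos hdmpos (by nlinarith [hDpos])) hcondpos
  have h1 : 1 / PhiA A π ≤ 1 / (dm / (2*D) * conductance G) :=
    one_div_le_one_div_of_le hcpos hPhiAle
  have h2 : 1 / (dm / (2*D) * conductance G) = 2 * (D / dm) * (1 / conductance G) := by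
    field_simp
  exact h1.trans_eq h2
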